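/- Suppose (a¹,a²,a³) ∈ ℝ³ and λ > 0 satisfy: a^l cos(√λ L_l) takes a common value for l = 1,2,3, Σ_{l=1}^3 a^l sin(√λ L_l) = 0, cos(√λ L_l) ≠ 0 for all l, and Σ_{l=1}^3 (a^l)² (L_l/2 + cos(L_l√λ)sin(L_l√λ)/(2√λ)) = 1. Then Σ_{l=1}^3 (a^l)² L_l / 2 = 1, and consequently |a^k|² (L_k + Σ_{l≠k} L_l cos²(√λ L_k)/cos²(√λ L_l)) = 2 for each k. -/

import Mathlib

theorem stmt_10 (L a : Fin 3 → ℝ) (lam : ℝ) (hlam : 0 < lam)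
    (hL : ∀ l, 0 < L l)
    (hcont : ∀ l m : Fin 3,
      a l * Real.cos (Real.sqrt lam * L l) = a m * Real.cos (Real.sqrt lam * L m))
    (hkirch : ∑ l : Fin 3, a l * Real.sin (Real.sqrt lam * L l) = 0)
    (hcos : ∀ l, Real.cos (Real.sqrt lam * L l) ≠ 0)
    (hnorm : ∑ l : Fin 3, (a l) ^ 2 *
      (L l / 2 + Real.cos (L l * Real.sqrt lam) * Real.sin (L l * Real.sqrt lam)
        / (2 * Real.sqrt lam)) = 1) :
    (∑ l : Fin 3, (a l) ^ 2 * L l / 2 = 1) ∧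
    ∀ k : Fin 3, (a k) ^ 2 * (L k + ∑ l ∈ Finset.univ.filter (· ≠ k),
        L l * Real.cos (Real.sqrt lam * L k) ^ 2 / Real.cos (Real.sqrt lam * L l) ^ 2)
      = 2 := by
  have hs : (0:ℝ) < Real.sqrt lam := Real.sqrt_pos.mpr hlam
  have e1 := hcont 1 0
  have e2 := hcont 2 0
  simp only [Fin.sum_univ_three] at hkirch hnorm
  simp only [mul_comm (L _) (Real.sqrt lam)] at hnorm
  have key : a 0 ^ 2 * (Real.cos (Real.sqrt lam * L 0) * Real.sin (Real.sqrt lam * L 0))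
      + a 1 ^ 2 * (Real.cos (Real.sqrt lam * L 1) * Real.sin (Real.sqrt lam * L 1))
      + a 2 ^ 2 * (Real.cos (Real.sqrt lam * L 2) * Real.sin (Real.sqrt lam * L 2)) = 0 := by
    linear_combination (a 0 * Real.cos (Real.sqrt lam * L 0)) * hkirch
      + (a 1 * Real.sin (Real.sqrt lam * L 1)) * e1
      + (a 2 * Real.sin (Real.sqrt lam * L 2)) * e2
  have hnorm' : a 0 ^ 2 * (L 0 * (2 * Real.sqrt lam)
        + Real.cos (Real.sqrt lam * L 0) * Real.sin (Real.sqrt lam * L 0) * 2)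
      + a 1 ^ 2 * (L 1 * (2 * Real.sqrt lam)
        + Real.cos (Real.sqrt lam * L 1) * Real.sin (Real.sqrt lam * L 1) * 2)
      + a 2 ^ 2 * (L 2 * (2 * Real.sqrt lam)
        + Real.cos (Real.sqrt lam * L 2) * Real.sin (Real.sqrt lam * L 2) * 2)
      = 2 * (2 * Real.sqrt lam) := by
    field_simp at hnorm
    rw [mul_comm (L 0) (Real.sqrt lam)] at hnorm
    linarith [hnorm]
  have hsum : a 0 ^ 2 * L 0 + a 1 ^ 2 * L 1 + a 2 ^ 2 * L 2 = 2 := by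
    have h2 : (a 0 ^ 2 * L 0 + a 1 ^ 2 * L 1 + a 2 ^ 2 * L 2) * Real.sqrt lam
        = 2 * Real.sqrt lam := by linear_combination (1/2) * hnorm' - key
    exact mul_right_cancel₀ (ne_of_gt hs) h2
  constructor
  · simp only [Fin.sum_univ_three]; linarith
  · intro k
    have hterm : ∀ l : Fin 3,
        a k ^ 2 * (L l * Real.cos (Real.sqrt lam * L k) ^ 2
          / Real.cos (Real.sqrt lam * L l) ^ 2) = a l ^ 2 * L l := by
      intro l
      have hk2 : a k ^ 2 * Real.cos (Real.sqrt lam * L k) ^ 2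
          = a l ^ 2 * Real.cos (Real.sqrt lam * L l) ^ 2 := by
        have := congrArg (· ^ 2) (hcont k l)
        simpa [mul_pow] using this
      rw [show a k ^ 2 * (L l * Real.cos (Real.sqrt lam * L k) ^ 2
          / Real.cos (Real.sqrt lam * L l) ^ 2)
        = (a k ^ 2 * Real.cos (Real.sqrt lam * L k) ^ 2)
          * (L l / Real.cos (Real.sqrt lam * L l) ^ 2) from by ring, hk2]
      field_simp [hcos l]
    have hall : ∑ l : Fin 3, a l ^ 2 * L l = 2 := by
      simp only [Fin.sum_univ_three]; linarith
    calc a k ^ 2 * (L k + ∑ l ∈ Finset.univ.filter (· ≠ k),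
          L l * Real.cos (Real.sqrt lam * L k) ^ 2 / Real.cos (Real.sqrt lam * L l) ^ 2)
        = a k ^ 2 * L k + ∑ l ∈ Finset.univ.filter (· ≠ k), a l ^ 2 * L l := by
          rw [mul_add, Finset.mul_sum]
          congr 1
          refine Finset.sum_congr rfl fun l _ => ?_
          rw [← hterm l, mul_div_assoc]
      _ = ∑ l : Fin 3, a l ^ 2 * L l := by
          rw [Finset.filter_ne', Finset.sum_erase_eq_sub (Finset.mem_univ k)]
          ring
      _ = 2 := hall
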